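/- Let A be an n×n exchange matrix, n ≥ 1 (a real matrix with nonnegative entries each of whose column sums equals 1). Then the equation Ap = p has a nontrivial solution with nonnegative entries: there exists p ∈ ℝⁿ with p ≠ 0, pᵢ ≥ 0 for every i, and Ap = p. -/

import Mathlib

open Filter Topology

set_option maxHeartbeats 1000000

/-- For an n×n exchange matrix A (nonnegative entries, each column sum 1), the
equation Ap = p has a nontrivial nonnegative solution. -/
theorem stmt10 (n : ℕ) (hn : 1 ≤ n) (A : Matrix (Fin n) (Fin n) ℝ)
    (hA : ∀ i j, 0 ≤ A i j) (hcol : ∀ j, ∑ i, A i j = 1) :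
    ∃ p : Fin n → ℝ, p ≠ 0 ∧ (∀ i, 0 ≤ p i) ∧ A.mulVec p = p := by
  have hnR : (0:ℝ) < n := by exact_mod_cast hn
  set S : Set (Fin n → ℝ) := {p | (∀ i, 0 ≤ p i) ∧ ∑ i, p i = 1} with hSdef
  -- A preserves S
  have hpres : ∀ q ∈ S, A.mulVec q ∈ S := by
    rintro q ⟨hq0, hq1⟩
    constructor
    · intro i
      simp only [Matrix.mulVec, dotProduct]
      exact Finset.sum_nonneg fun j _ => mul_nonneg (hA i j) (hq0 j)
    · have : ∑ i, ∑ j, A i j * q j = ∑ j, (∑ i, A i j) * q j := by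
        rw [Finset.sum_comm]
        simp [Finset.sum_mul]
      simp [Matrix.mulVec, dotProduct, this, hcol, hq1]
  -- starting vector
  set e : Fin n → ℝ := fun _ => (n:ℝ)⁻¹ with hedef
  have heS : e ∈ S := by
    constructor
    · intro i; positivity
    · simp [hedef, Finset.card_univ, mul_inv_cancel₀ (ne_of_gt hnR)]
  set v : ℕ → (Fin n → ℝ) := fun k => (A ^ k).mulVec e with hvdef
  have hv0 : v 0 = e := by simp [hvdef]
  have hvsucc : ∀ k, v (k + 1) = A.mulVec (v k) := by
    intro k
    simp [hvdef, pow_succ', Matrix.mulVec_mulVec]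
  have hvS : ∀ k, v k ∈ S := by
    intro k
    induction k with
    | zero => simpa [hv0] using heS
    | succ k ih => rw [hvsucc]; exact hpres _ ih
  -- Cesàro averages
  set u : ℕ → (Fin n → ℝ) := fun N => ((N:ℝ)+1)⁻¹ • ∑ k ∈ Finset.range (N+1), v k
    with hudef
  have hNpos : ∀ N : ℕ, (0:ℝ) < (N:ℝ) + 1 := fun N => by positivity
  have huS : ∀ N, u N ∈ S := by
    intro N
    constructor
    · intro i
      simp only [hudef, Pi.smul_apply, Finset.sum_apply, smul_eq_mul]
      exact mul_nonneg (by positivity)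
        (Finset.sum_nonneg fun k _ => (hvS k).1 i)
    · have : ∑ i, (∑ k ∈ Finset.range (N+1), v k) i = (N:ℝ) + 1 := by
        simp only [Finset.sum_apply]
        rw [Finset.sum_comm]
        have : ∀ k ∈ Finset.range (N+1), ∑ i, v k i = 1 := fun k _ => (hvS k).2
        rw [Finset.sum_congr rfl this]
        simp
      simp only [hudef, Pi.smul_apply, smul_eq_mul, ← Finset.mul_sum]
      rw [this]
      exact inv_mul_cancel₀ (ne_of_gt (hNpos N))
  -- the defect
  set d : ℕ → (Fin n → ℝ) := fun N => ((N:ℝ)+1)⁻¹ • (v (N+1) - v 0) with hddef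
  have hAu : ∀ N, A.mulVec (u N) = u N + d N := by
    intro N
    have hlin : A.mulVec (u N)
        = ((N:ℝ)+1)⁻¹ • ∑ k ∈ Finset.range (N+1), v (k+1) := by
      rw [hudef]
      rw [Matrix.mulVec_smul]
      congr 1
      rw [← A.mulVecLin_apply, map_sum]
      exact Finset.sum_congr rfl fun k _ => by
        rw [Matrix.mulVecLin_apply, ← hvsucc]
    have htel : ∑ k ∈ Finset.range (N+1), v (k+1)
        = (∑ k ∈ Finset.range (N+1), v k) + (v (N+1) - v 0) := by
      have h1 : ∑ k ∈ Finset.range (N+2), v k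
          = (∑ k ∈ Finset.range (N+1), v (k+1)) + v 0 := Finset.sum_range_succ' v (N+1)
      have h2 : ∑ k ∈ Finset.range (N+2), v k
          = (∑ k ∈ Finset.range (N+1), v k) + v (N+1) := Finset.sum_range_succ v (N+1)
      have h3 := h1.symm.trans h2
      calc ∑ k ∈ Finset.range (N+1), v (k+1)
          = (∑ k ∈ Finset.range (N+1), v k + v (N+1)) - v 0 := eq_sub_of_add_eq h3
        _ = _ := add_sub_assoc _ _ _
    rw [hlin, htel, smul_add, hudef, hddef]
  -- bound on entries: vectors in S have norm ≤ 1
  have hnormS : ∀ q ∈ S, ‖q‖ ≤ 1 := by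
    rintro q ⟨hq0, hq1⟩
    refine (pi_norm_le_iff_of_nonneg zero_le_one).2 fun i => ?_
    rw [Real.norm_eq_abs, abs_of_nonneg (hq0 i)]
    calc q i ≤ ∑ j, q j := Finset.single_le_sum (fun j _ => hq0 j) (Finset.mem_univ i)
      _ = 1 := hq1
  have hd0 : Tendsto d atTop (𝓝 0) := by
    have hb : ∀ N, ‖d N‖ ≤ 2 / ((N:ℝ)+1) := by
      intro N
      rw [hddef]
      simp only [norm_smul, Real.norm_eq_abs, abs_of_pos (inv_pos.2 (hNpos N))]
      rw [div_eq_inv_mul]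
      refine mul_le_mul_of_nonneg_left ?_ (le_of_lt (inv_pos.2 (hNpos N)))
      calc ‖v (N+1) - v 0‖ ≤ ‖v (N+1)‖ + ‖v 0‖ := norm_sub_le _ _
        _ ≤ 1 + 1 := add_le_add (hnormS _ (hvS _)) (hnormS _ (hvS _))
        _ = 2 := by norm_num
    have h1 : Tendsto (fun N : ℕ => (N:ℝ) + 1) atTop atTop :=
      tendsto_natCast_atTop_atTop.atTop_add tendsto_const_nhds
    have hg : Tendsto (fun N : ℕ => 2 / ((N:ℝ)+1)) atTop (𝓝 0) := by
      have h2 := h1.inv_tendsto_atTop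
      have h3 := h2.const_mul (2:ℝ)
      simpa [div_eq_mul_inv] using h3
    exact squeeze_zero_norm hb hg
  -- compactness of S
  have hclosed : IsClosed S := by
    have h1 : IsClosed {p : Fin n → ℝ | ∀ i, 0 ≤ p i} := by
      have : {p : Fin n → ℝ | ∀ i, 0 ≤ p i} = ⋂ i, {p | 0 ≤ p i} := by
        ext p; simp
      rw [this]
      exact isClosed_iInter fun i => isClosed_le continuous_const (continuous_apply i)
    have h2 : IsClosed {p : Fin n → ℝ | ∑ i, p i = 1} :=
      isClosed_eq (continuous_finset_sum _ fun i _ => continuous_apply i) continuous_const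
    exact h1.inter h2
  have hcpt : IsCompact S := by
    refine (isCompact_Icc (a := (0 : Fin n → ℝ)) (b := 1)).of_isClosed_subset hclosed ?_
    rintro q ⟨hq0, hq1⟩
    constructor
    · intro i; exact hq0 i
    · intro i
      calc q i ≤ ∑ j, q j := Finset.single_le_sum (fun j _ => hq0 j) (Finset.mem_univ i)
        _ = 1 := hq1
  obtain ⟨p, hpS, φ, hφ, hlim⟩ := hcpt.tendsto_subseq huS
  refine ⟨p, ?_, hpS.1, ?_⟩
  · intro h
    have := hpS.2
    rw [h] at this
    simp at this
  · -- A.mulVec continuous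
    have hcont : Continuous (A.mulVec) := by
      have := A.mulVecLin.continuous_of_finiteDimensional
      simpa [Matrix.mulVecLin_apply, Matrix.coe_mulVecLin] using this
    have h1 : Tendsto (fun m => A.mulVec (u (φ m))) atTop (𝓝 (A.mulVec p)) :=
      (hcont.tendsto p).comp hlim
    have h2 : Tendsto (fun m => A.mulVec (u (φ m))) atTop (𝓝 p) := by
      have hdφ : Tendsto (fun m => d (φ m)) atTop (𝓝 0) :=
        hd0.comp hφ.tendsto_atTop
      have := hlim.add hdφ
      rw [add_zero] at this
      exact this.congr fun m => (hAu (φ m)).symm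
    exact tendsto_nhds_unique h1 h2
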